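/- Let $f(x) = x^3 + \alpha x + \beta \in \mathbb{Q}_3[x]$ be an irreducible depressed cubic generating a ramified Galois extension $\mathbb{Q}_3(\theta)/\mathbb{Q}_3$, with $v_3(\beta) \equiv 0 \pmod 3$, unit part $u$ of $\beta$ satisfying $u \equiv 1 \pmod 9$, and let $w$ be the unit part of $\alpha$. Then $N_{\mathbb{Q}_3(\theta)/\mathbb{Q}_3}(\theta + 3^m) \cdot 3^{-3m} = 1 - u + 3w$ where $m = v_3(\beta)/3$, and $1 - u + 3w$ has valuation exactly 1 (hence is not a cube in $\mathbb{Q}_3$). -/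

import Mathlib

open Polynomial

private lemma zmod3_aniso : ∀ a b c : ZMod 3,
    a^3 - 1*b^3 + 1^2*c^3 - 2*(2*(a^2*c)) + 2*(a*b^2) + 2^2*(a*c^2) + 3*(1*(a*b*c)) - 2*(1*(b*(c^2))) = 0 →
    a = 0 ∧ b = 0 ∧ c = 0 := by decide

private lemma padic3_val_zpow (k : ℤ) : ((3:ℚ_[3]) ^ k).valuation = k := by
  have h3 : ((3:ℚ_[3])) = ((3:ℕ) : ℚ_[3]) := by norm_num
  have hne : ((3:ℚ_[3]))  ≠ 0 := by norm_num
  have h1 : ‖(3:ℚ_[3])^k‖ = (3:ℝ) ^ (-k) := by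
    rw [h3, Padic.norm_p_zpow]; norm_num
  have h2 : ‖(3:ℚ_[3])^k‖ = (3:ℝ) ^ (-((3:ℚ_[3])^k).valuation) := by
    rw [Padic.norm_eq_zpow_neg_valuation (zpow_ne_zero _ hne)]; norm_num
  rw [h1] at h2
  have := zpow_right_injective₀ (by norm_num : (0:ℝ) < 3) (by norm_num : (3:ℝ) ≠ 1) h2.symm
  omega

private lemma padic3_val_add {x y : ℚ_[3]} (hx : x ≠ 0)
    (hxy : y = 0 ∨ (y ≠ 0 ∧ x.valuation < y.valuation)) :
    x + y ≠ 0 ∧ (x + y).valuation = x.valuation := by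
  rcases hxy with rfl | ⟨hy, hlt⟩
  · simpa using hx
  have hnorm : ‖y‖ < ‖x‖ := by
    rw [Padic.norm_eq_zpow_neg_valuation hx, Padic.norm_eq_zpow_neg_valuation hy]
    apply zpow_lt_zpow_right₀ (by norm_num : (1:ℝ) < 3)
    omega
  have hmax : ‖x + y‖ = ‖x‖ := by
    rw [Padic.add_eq_max_of_ne (ne_of_gt hnorm)]
    exact max_eq_left hnorm.le
  have hne : x + y ≠ 0 := by
    intro h
    rw [h, norm_zero] at hmax
    exact hx (norm_eq_zero.mp hmax.symm)
  refine ⟨hne, ?_⟩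
  rw [Padic.norm_eq_zpow_neg_valuation hne, Padic.norm_eq_zpow_neg_valuation hx] at hmax
  have := zpow_right_injective₀ (by norm_num : (0:ℝ) < 3) (by norm_num : (3:ℝ) ≠ 1) hmax
  omega

private lemma padicInt_norm_one_iff (x : ℤ_[3]) : ‖x‖ = 1 ↔ PadicInt.toZMod x ≠ 0 := by
  have h1 : PadicInt.toZMod x = 0 ↔ x ∈ RingHom.ker (PadicInt.toZMod (p := 3)) := by
    simp [RingHom.mem_ker]
  have h2 : (x ∈ IsLocalRing.maximalIdeal ℤ_[3]) ↔ ‖x‖ < 1 := by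
    rw [PadicInt.maximalIdeal_eq_span_p, Ideal.mem_span_singleton, ← PadicInt.norm_lt_one_iff_dvd]
  constructor
  · intro h hz
    rw [h1, PadicInt.ker_toZMod, h2, h] at hz
    norm_num at hz
  · intro h
    rcases lt_or_eq_of_le (PadicInt.norm_le_one x) with hlt | he
    · exact absurd (h1.mpr (by rw [PadicInt.ker_toZMod]; exact h2.mpr hlt)) h
    · exact he

private lemma scale3 (a b c : ℚ_[3]) (h : ¬(a = 0 ∧ b = 0 ∧ c = 0)) :
    ∃ (k : ℤ) (a' b' c' : ℤ_[3]),
      a = (3:ℚ_[3])^k * (a' : ℚ_[3]) ∧ b = (3:ℚ_[3])^k * (b' : ℚ_[3]) ∧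
      c = (3:ℚ_[3])^k * (c' : ℚ_[3]) ∧ (‖a'‖ = 1 ∨ ‖b'‖ = 1 ∨ ‖c'‖ = 1) := by
  have hcast : ((3:ℕ) : ℚ_[3]) = (3:ℚ_[3]) := by norm_num
  have hznorm : ∀ j : ℤ, ‖(3:ℚ_[3])^j‖ = (3:ℝ)^(-j) := by
    intro j; rw [← hcast, Padic.norm_p_zpow]; norm_num
  set r := max ‖a‖ (max ‖b‖ ‖c‖) with hr
  have hle : ‖a‖ ≤ r ∧ ‖b‖ ≤ r ∧ ‖c‖ ≤ r :=
    ⟨le_max_left _ _, le_trans (le_max_left _ _) (le_max_right _ _),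
      le_trans (le_max_right _ _) (le_max_right _ _)⟩
  have hattain : r = ‖a‖ ∨ r = ‖b‖ ∨ r = ‖c‖ := by
    rcases max_choice ‖b‖ ‖c‖ with h1 | h1 <;>
      rcases max_choice ‖a‖ (max ‖b‖ ‖c‖) with h2 | h2 <;>
        rw [hr, h2] <;> simp [h1]
  have hrpos : 0 < r := by
    rcases not_and_or.mp h with ha | h2
    · exact lt_of_lt_of_le (norm_pos_iff.mpr ha) hle.1
    rcases not_and_or.mp h2 with hb | hc
    · exact lt_of_lt_of_le (norm_pos_iff.mpr hb) hle.2.1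
    · exact lt_of_lt_of_le (norm_pos_iff.mpr hc) hle.2.2
  -- get k with r = 3^(-k)
  obtain ⟨z, hz0, hzr⟩ : ∃ z : ℚ_[3], z ≠ 0 ∧ r = ‖z‖ := by
    rcases hattain with h1 | h1 | h1 <;> refine ⟨_, ?_, h1⟩ <;>
      [skip; skip; skip] <;> { intro h0; rw [h0, norm_zero] at h1; exact absurd h1.symm (ne_of_lt hrpos) }
  obtain ⟨k, hk⟩ : ∃ k : ℤ, r = (3:ℝ)^(-k) := ⟨z.valuation, by rw [hzr, Padic.norm_eq_zpow_neg_valuation hz0]; norm_num⟩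
  have key : ∀ x : ℚ_[3], ‖x‖ ≤ r → ∃ x' : ℤ_[3],
      x = (3:ℚ_[3])^k * (x' : ℚ_[3]) ∧ ‖(x' : ℚ_[3])‖ = ‖x‖ / r := by
    intro x hx
    have hnorm : ‖x * (3:ℚ_[3])^(-k)‖ = ‖x‖ / r := by
      rw [norm_mul, hznorm, hk]; rw [neg_neg]; field_simp
      rw [mul_assoc, ← zpow_add₀ (by norm_num : (3:ℝ) ≠ 0), add_neg_cancel, zpow_zero, mul_one]
    refine ⟨⟨x * (3:ℚ_[3])^(-k), ?_⟩, ?_, ?_⟩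
    · rw [hnorm]; rw [div_le_one hrpos]; exact hx
    · push_cast
      rw [mul_comm, mul_assoc, ← zpow_add₀ (by norm_num : (3:ℚ_[3]) ≠ 0)]
      simp
    · exact hnorm
  obtain ⟨a', ha, hna⟩ := key a hle.1
  obtain ⟨b', hb, hnb⟩ := key b hle.2.1
  obtain ⟨c', hc, hnc⟩ := key c hle.2.2
  refine ⟨k, a', b', c', ha, hb, hc, ?_⟩
  have hP : ∀ x' : ℤ_[3], ‖(x' : ℚ_[3])‖ = ‖x'‖ := fun x' => rfl
  rcases hattain with h1 | h1 | h1
  · exact Or.inl (by rw [← hP, hna, ← h1, div_self (ne_of_gt hrpos)])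
  · exact Or.inr (Or.inl (by rw [← hP, hnb, ← h1, div_self (ne_of_gt hrpos)]))
  · exact Or.inr (Or.inr (by rw [← hP, hnc, ← h1, div_self (ne_of_gt hrpos)]))

private lemma v_galois_invariant (L : Type) [Field L] [Algebra ℚ_[3] L] [FiniteDimensional ℚ_[3] L]
    (v : L → ℚ)
    (hmul : ∀ x y : L, x ≠ 0 → y ≠ 0 → v (x * y) = v x + v y)
    (hadd : ∀ x y : L, x ≠ 0 → y ≠ 0 → x + y ≠ 0 → min (v x) (v y) ≤ v (x + y))
    (hext : ∀ x : ℚ_[3], x ≠ 0 → v (algebraMap ℚ_[3] L x) = (x.valuation : ℚ)) :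
    ∀ (σ : L ≃ₐ[ℚ_[3]] L) (x : L), x ≠ 0 → v (σ x) = v x := by
  classical
  set nn : L → ℝ := fun x => if x = 0 then 0 else (3:ℝ) ^ (-(v x : ℝ)) with hnn
  have h3pos : (0:ℝ) < 3 := by norm_num
  have hpos : ∀ x : L, x ≠ 0 → 0 < nn x := by
    intro x hx; rw [hnn]; simp only [if_neg hx]; exact Real.rpow_pos_of_pos h3pos _
  have hnnval : ∀ x : L, x ≠ 0 → nn x = (3:ℝ) ^ (-(v x : ℝ)) := by
    intro x hx; rw [hnn]; simp only [if_neg hx]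
  have hmono : ∀ a b : ℚ, a ≤ b → (3:ℝ) ^ (-(b:ℝ)) ≤ (3:ℝ) ^ (-(a:ℝ)) := by
    intro a b hab
    apply (Real.rpow_le_rpow_left_iff (by norm_num : (1:ℝ) < 3)).mpr
    simp only [neg_le_neg_iff]; exact_mod_cast hab
  have hmax : ∀ x y : L, nn (x + y) ≤ max (nn x) (nn y) := by
    intro x y
    by_cases hx : x = 0
    · simp [hx, hnn, le_max_right]
    by_cases hy : y = 0
    · simp [hy, hnn, le_max_left]
    by_cases hxy : x + y = 0
    · simp only [hxy, hnn, if_pos rfl, if_neg hx, if_neg hy, le_max_iff]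
      exact Or.inl (Real.rpow_pos_of_pos h3pos _).le
    have hm := hadd x y hx hy hxy
    rw [hnnval _ hxy, hnnval _ hx, hnnval _ hy]
    rcases le_total (v x) (v y) with h | h
    · refine le_max_of_le_left ?_
      exact hmono _ _ (by rw [min_eq_left h] at hm; exact hm)
    · refine le_max_of_le_right ?_
      exact hmono _ _ (by rw [min_eq_right h] at hm; exact hm)
  let av : AbsoluteValue L ℝ :=
    { toFun := nn
      map_mul' := by
        intro x y
        by_cases hx : x = 0
        · simp [hx, hnn]
        by_cases hy : y = 0
        · simp [hy, hnn]
        rw [hnnval _ (mul_ne_zero hx hy), hnnval _ hx, hnnval _ hy,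
          ← Real.rpow_add h3pos, hmul x y hx hy]
        push_cast
        ring_nf
      nonneg' := by
        intro x
        by_cases hx : x = 0
        · simp [hx, hnn]
        · exact (hpos x hx).le
      eq_zero' := by
        intro x
        constructor
        · intro h
          by_contra hx
          exact absurd h (ne_of_gt (hpos x hx))
        · intro h; simp [h, hnn]
      add_le' := by
        intro x y
        refine le_trans (hmax x y) ?_
        have h1 : 0 ≤ nn x := by
          by_cases hx : x = 0
          · simp [hx, hnn]
          · exact (hpos x hx).le
        have h2 : 0 ≤ nn y := by
          by_cases hy : y = 0
          · simp [hy, hnn]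
          · exact (hpos y hy).le
        rcases max_choice (nn x) (nn y) with h | h <;> rw [h] <;> linarith }
  letI : NormedField L := av.toNormedField
  have hnorm_def : ∀ x : L, ‖x‖ = nn x := fun _ => rfl
  have hinj : Function.Injective (algebraMap ℚ_[3] L) := RingHom.injective _
  have hQnorm : ∀ q : ℚ_[3], ‖algebraMap ℚ_[3] L q‖ = ‖q‖ := by
    intro q
    by_cases hq : q = 0
    · simp [hq, hnorm_def, hnn]
    have hq' : algebraMap ℚ_[3] L q ≠ 0 := fun h => hq (hinj (by rwa [map_zero]))
    rw [hnorm_def, hnnval _ hq', hext q hq, Padic.norm_eq_zpow_neg_valuation hq]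
    rw [show ((3:ℕ):ℝ) = (3:ℝ) by norm_num]
    rw [← Real.rpow_intCast (3:ℝ) (-q.valuation)]
    push_cast
    ring_nf
  letI : NormedSpace ℚ_[3] L :=
    { norm_smul_le := by
        intro a x
        rw [Algebra.smul_def, norm_mul, hQnorm] }
  have hle : ∀ (σ : L ≃ₐ[ℚ_[3]] L) (x : L), ‖σ x‖ ≤ ‖x‖ := by
    intro σ x
    have hcont : Continuous σ.toLinearMap := σ.toLinearMap.continuous_of_finiteDimensional
    obtain ⟨C, hC0, hC⟩ := (⟨σ.toLinearMap, hcont⟩ : L →L[ℚ_[3]] L).bound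
    by_cases hx : x = 0
    · simp [hx]
    by_contra hgt
    push_neg at hgt
    have hxpos : 0 < ‖x‖ := norm_pos_iff.mpr hx
    have hratio : 1 < ‖σ x‖ / ‖x‖ := (one_lt_div hxpos).mpr hgt
    obtain ⟨n, hn⟩ := pow_unbounded_of_one_lt C hratio
    have hbound : ‖σ x‖ ^ n ≤ C * ‖x‖ ^ n := by
      calc ‖σ x‖ ^ n = ‖(σ x) ^ n‖ := (norm_pow _ n).symm
        _ = ‖σ (x ^ n)‖ := by rw [map_pow]
        _ ≤ C * ‖x ^ n‖ := hC (x ^ n)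
        _ = C * ‖x‖ ^ n := by rw [norm_pow]
    have : (‖σ x‖ / ‖x‖) ^ n ≤ C := by
      rw [div_pow, div_le_iff₀ (pow_pos hxpos n)]
      exact hbound
    linarith
  intro σ x hx
  have h1 : ‖σ x‖ = ‖x‖ := by
    refine le_antisymm (hle σ x) ?_
    have := hle σ.symm (σ x)
    rwa [AlgEquiv.symm_apply_apply] at this
  have hσx : σ x ≠ 0 := by
    intro h
    exact hx (by simpa using σ.injective (h.trans (map_zero σ).symm))
  rw [hnorm_def, hnorm_def, hnnval _ hσx, hnnval _ hx] at h1
  have h2 : -((v (σ x) : ℝ)) = -((v x : ℝ)) := by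
    by_contra hne
    rcases lt_or_gt_of_ne hne with h | h
    · exact absurd h1 (ne_of_lt ((Real.rpow_lt_rpow_left_iff (by norm_num : (1:ℝ) < 3)).mpr h))
    · exact absurd h1 (ne_of_gt ((Real.rpow_lt_rpow_left_iff (by norm_num : (1:ℝ) < 3)).mpr h))
  have : ((v (σ x) : ℝ)) = ((v x : ℝ)) := by linarith
  exact_mod_cast this

set_option maxHeartbeats 1000000 in
/-- For an irreducible depressed cubic `x³ + αx + β` over `ℚ₃` generating a ramified
Galois extension, with `v₃(β) = 3m`, unit part `u = 3^{-3m}β ≡ 1 (mod 9)`, and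
`w = 3^{-(2m+1)}α`: `N(θ + 3^m)·3^{-3m} = 1 - u + 3w`, which has valuation exactly 1
(hence is not a cube in `ℚ₃`). -/
theorem stmt_18 (α β : ℚ_[3])
    (hirr : Irreducible (X ^ 3 + C α * X + C β : Polynomial ℚ_[3]))
    (L : Type) [Field L] [Algebra ℚ_[3] L] [FiniteDimensional ℚ_[3] L]
    (θ : L) (hroot : Polynomial.aeval θ (X ^ 3 + C α * X + C β : Polynomial ℚ_[3]) = 0)
    (hgen : IntermediateField.adjoin ℚ_[3] {θ} = ⊤)
    [IsGalois ℚ_[3] L]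
    (v : L → ℚ)
    (hmul : ∀ x y : L, x ≠ 0 → y ≠ 0 → v (x * y) = v x + v y)
    (hadd : ∀ x y : L, x ≠ 0 → y ≠ 0 → x + y ≠ 0 → min (v x) (v y) ≤ v (x + y))
    (hext : ∀ x : ℚ_[3], x ≠ 0 → v (algebraMap ℚ_[3] L x) = (x.valuation : ℚ))
    (hram : ∃ x : L, x ≠ 0 ∧ ∀ m : ℤ, v x ≠ (m : ℚ))
    (m : ℤ) (hm : β.valuation = 3 * m)
    (u w : ℚ_[3])
    (hu : u = β / (3 : ℚ_[3]) ^ (3 * m)) (hw : w = α / (3 : ℚ_[3]) ^ (2 * m + 1))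
    (hu1 : ∃ c : ℤ_[3], u - 1 = 9 * (c : ℚ_[3])) :
    Algebra.norm ℚ_[3] (θ + algebraMap ℚ_[3] L ((3 : ℚ_[3]) ^ m)) * (3 : ℚ_[3]) ^ (-(3 * m)) =
        1 - u + 3 * w ∧
      (1 - u + 3 * w).valuation = 1 ∧
      ¬ ∃ c : ℚ_[3], c ^ 3 = 1 - u + 3 * w := by
  classical
  set f : Polynomial ℚ_[3] := X ^ 3 + C α * X + C β with hf
  set em := algebraMap ℚ_[3] L with hem
  have hdeglow : (C α * X + C β).degree < 3 := by
    refine lt_of_le_of_lt (Polynomial.degree_add_le _ _) ?_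
    rw [max_lt_iff]
    constructor
    · refine lt_of_le_of_lt (Polynomial.degree_mul_le _ _) ?_
      refine lt_of_le_of_lt (add_le_add Polynomial.degree_C_le (le_of_eq Polynomial.degree_X)) ?_
      norm_num
    · exact lt_of_le_of_lt Polynomial.degree_C_le (by norm_num)
  have hfa : f = X ^ 3 + (C α * X + C β) := by rw [hf]; ring
  have hmonic : f.Monic := by rw [hfa]; exact Polynomial.monic_X_pow_add hdeglow
  have hdegree : f.degree = 3 := by
    rw [hfa]
    rw [Polynomial.degree_add_eq_left_of_degree_lt (by simpa using hdeglow)]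
    simp
  have hdegf : f.natDegree = 3 := Polynomial.natDegree_eq_of_degree_eq_some hdegree
  have hinj : Function.Injective em := RingHom.injective _
  have hemne : ∀ q : ℚ_[3], q ≠ 0 → em q ≠ 0 := by
    intro q hq h
    exact hq (hinj (by rwa [map_zero]))
  have hroot' : θ^3 + em α * θ + em β = 0 := by
    have h := hroot
    rw [hf] at h
    simp only [map_add, map_mul, map_pow, aeval_X, aeval_C] at h
    linear_combination h
  have hβ : β ≠ 0 := by
    intro h0
    have hdvd : (X : Polynomial ℚ_[3]) ∣ f := by
      refine ⟨X^2 + C α, ?_⟩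
      rw [hf, h0]; ring_nf; simp
    obtain ⟨q, hq⟩ := hdvd
    rcases hirr.isUnit_or_isUnit hq with h | h
    · rw [Polynomial.isUnit_iff_degree_eq_zero] at h
      rw [Polynomial.degree_X] at h
      norm_num at h
    · rw [Polynomial.isUnit_iff_degree_eq_zero] at h
      have : f.degree = (X : ℚ_[3][X]).degree + q.degree := by rw [hq]; exact Polynomial.degree_mul
      rw [hdegree, Polynomial.degree_X, h] at this
      norm_num at this
  have hθ : θ ≠ 0 := by
    intro h0
    rw [h0] at hroot'
    simp at hroot'
    exact hβ hroot'
  -- minimal polynomial and rank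
  have hint : IsIntegral ℚ_[3] θ := IsIntegral.of_finite _ _
  have hmin : minpoly ℚ_[3] θ = f := (minpoly.eq_of_irreducible_of_monic hirr hroot hmonic).symm
  have hrank : Module.finrank ℚ_[3] L = 3 := by
    have h1 := IntermediateField.adjoin.finrank hint
    rw [hmin, hdegf] at h1
    rw [hgen] at h1
    rw [← IntermediateField.finrank_top' (F := ℚ_[3]) (E := L)]
    exact h1
  have hcard : Fintype.card (L ≃ₐ[ℚ_[3]] L) = 3 := by
    rw [Fintype.card_eq_nat_card, IsGalois.card_aut_eq_finrank, hrank]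
  -- Galois group structure
  obtain ⟨σ, hσ1⟩ := Fintype.exists_ne_of_one_lt_card (by rw [hcard]; norm_num) (1 : L ≃ₐ[ℚ_[3]] L)
  have horder : orderOf σ = 3 := by
    have hdvd : orderOf σ ∣ 3 := by have h := orderOf_dvd_card (x := σ); rwa [hcard] at h
    rcases Nat.Prime.eq_one_or_self_of_dvd Nat.prime_three _ hdvd with h | h
    · exact absurd (orderOf_eq_one_iff.mp h) hσ1
    · exact h
  have hσ3 : σ ^ 3 = 1 := by have h := pow_orderOf_eq_one σ; rwa [horder] at h
  have hσ2ne : σ ^ 2 ≠ 1 := by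
    intro h
    have h2 := orderOf_dvd_of_pow_eq_one h
    rw [horder] at h2
    omega
  have hσσ2 : σ ≠ σ ^ 2 := by
    intro h
    have h2 : σ * 1 = σ * σ := by rw [mul_one, ← pow_two, ← h]
    exact hσ1 (mul_left_cancel h2).symm
  have huniv : (Finset.univ : Finset (L ≃ₐ[ℚ_[3]] L)) = {1, σ, σ^2} := by
    symm
    apply Finset.eq_univ_of_card
    rw [show ({1, σ, σ^2} : Finset (L ≃ₐ[ℚ_[3]] L)) = insert 1 (insert σ {σ^2}) from rfl]
    rw [Finset.card_insert_of_notMem (by simp [Ne.symm hσ1, Ne.symm hσ2ne]),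
      Finset.card_insert_of_notMem (by simp [hσσ2]), Finset.card_singleton, hcard]
  have hprod : ∀ g : (L ≃ₐ[ℚ_[3]] L) → L, ∏ τ, g τ = g 1 * g σ * g (σ^2) := by
    intro g
    rw [huniv]
    rw [show ({1, σ, σ^2} : Finset (L ≃ₐ[ℚ_[3]] L)) = insert 1 (insert σ {σ^2}) from rfl]
    rw [Finset.prod_insert (by simp [Ne.symm hσ1, Ne.symm hσ2ne]),
      Finset.prod_insert (by simp [hσσ2]), Finset.prod_singleton, mul_assoc]
  -- fixed points
  have hadj : Algebra.adjoin ℚ_[3] {θ} = ⊤ := by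
    have h := IntermediateField.adjoin_simple_toSubalgebra_of_isAlgebraic hint.isAlgebraic
    rw [hgen] at h
    rw [← h]
    rfl
  have hfix : ∀ τ : (L ≃ₐ[ℚ_[3]] L), τ θ = θ → τ = 1 := by
    intro τ hτ
    have hle : Algebra.adjoin ℚ_[3] {θ} ≤ AlgHom.equalizer (τ : L →ₐ[ℚ_[3]] L) ((1 : L ≃ₐ[ℚ_[3]] L) : L →ₐ[ℚ_[3]] L) := by
      apply Algebra.adjoin_le
      intro x hx
      rcases Set.mem_singleton_iff.mp hx with rfl
      simpa using hτ
    rw [hadj, top_le_iff] at hle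
    apply AlgEquiv.ext
    intro x
    have hx : x ∈ AlgHom.equalizer (τ : L →ₐ[ℚ_[3]] L) ((1 : L ≃ₐ[ℚ_[3]] L) : L →ₐ[ℚ_[3]] L) := by rw [hle]; trivial
    simpa using hx
  -- the three roots
  set θ₂ := σ θ with hθ₂def
  set θ₃ := σ θ₂ with hθ₃def
  have hσ2θ : (σ ^ 2) θ = θ₃ := by
    rw [pow_two, AlgEquiv.mul_apply, ← hθ₂def, ← hθ₃def]
  have hσθ₃ : σ θ₃ = θ := by
    have h := congrArg (fun τ : L ≃ₐ[ℚ_[3]] L => τ θ) hσ3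
    simp only [pow_succ, AlgEquiv.mul_apply, AlgEquiv.one_apply] at h
    rw [hθ₃def, hθ₂def]
    calc σ (σ (σ θ)) = ((1 : L ≃ₐ[ℚ_[3]] L) : L ≃ₐ[ℚ_[3]] L) θ := by
          rw [← hσ3]
          simp [pow_succ, AlgEquiv.mul_apply]
      _ = θ := rfl
  have hne12 : θ ≠ θ₂ := by
    intro h
    exact hσ1 (hfix σ h.symm)
  have hne23 : θ₂ ≠ θ₃ := by
    intro h
    have h2 : σ θ₂ = θ₂ := by rw [← hθ₃def, ← h]
    have h3 : σ (σ θ) = σ θ := by rw [← hθ₂def]; exact h2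
    exact hσ1 (hfix σ (σ.injective h3))
  have hne13 : θ ≠ θ₃ := by
    intro h
    apply hσ2ne
    apply hfix
    rw [hσ2θ, ← h]
  have hθ₂ne : θ₂ ≠ 0 := by
    intro h
    refine hθ (σ.injective ?_)
    rw [map_zero, ← hθ₂def]
    exact h
  have hθ₃ne : θ₃ ≠ 0 := by
    intro h
    refine hθ₂ne (σ.injective ?_)
    rw [map_zero, ← hθ₃def]
    exact h
  -- conjugate root equations
  have hroot₂ : θ₂^3 + em α * θ₂ + em β = 0 := by
    have h := congrArg σ hroot'
    simpa [map_add, map_mul, map_pow, hem] using h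
  have hroot₃ : θ₃^3 + em α * θ₃ + em β = 0 := by
    have h := congrArg σ hroot₂
    simpa [map_add, map_mul, map_pow, hem] using h
  -- symmetric function identities
  have hfac1 : (θ - θ₂) * (θ^2 + θ*θ₂ + θ₂^2 + em α) = 0 := by linear_combination hroot' - hroot₂
  have h12 : θ^2 + θ*θ₂ + θ₂^2 + em α = 0 := by
    rcases mul_eq_zero.mp hfac1 with h | h
    · exact absurd (sub_eq_zero.mp h) hne12
    · exact h
  have hfac2 : (θ - θ₃) * (θ^2 + θ*θ₃ + θ₃^2 + em α) = 0 := by linear_combination hroot' - hroot₃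
  have h13 : θ^2 + θ*θ₃ + θ₃^2 + em α = 0 := by
    rcases mul_eq_zero.mp hfac2 with h | h
    · exact absurd (sub_eq_zero.mp h) hne13
    · exact h
  have hfac3 : (θ₂ - θ₃) * (θ + θ₂ + θ₃) = 0 := by linear_combination h12 - h13
  have hsum : θ + θ₂ + θ₃ = 0 := by
    rcases mul_eq_zero.mp hfac3 with h | h
    · exact absurd (sub_eq_zero.mp h) hne23
    · exact h
  have he2 : θ*θ₂ + θ*θ₃ + θ₂*θ₃ = em α := by linear_combination (θ + θ₂)*hsum - h12
  have he3 : θ*θ₂*θ₃ = - em β := by linear_combination hroot' - θ*h12 + (θ*θ₂)*hsum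
  -- norm of θ + lam
  have hnormgen : ∀ lam : ℚ_[3],
      Algebra.norm ℚ_[3] (θ + em lam) = lam^3 + α*lam - β := by
    intro lam
    have h1 := Algebra.norm_eq_prod_automorphisms ℚ_[3] (θ + em lam)
    rw [hprod] at h1
    simp only [map_add, AlgEquiv.one_apply, hem, AlgEquiv.commutes] at h1
    rw [← hθ₂def, hσ2θ] at h1
    apply hinj
    rw [hem] at *
    rw [h1]
    simp only [map_add, map_mul, map_pow, map_sub]
    linear_combination he3 + (algebraMap ℚ_[3] L lam) * he2 + (algebraMap ℚ_[3] L lam)^2 * hsum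
  -- v-framework
  have hσv := v_galois_invariant L v hmul hadd hext
  have h3ne : (3:ℚ_[3]) ≠ 0 := by norm_num
  have hz3 : ∀ k : ℤ, (3:ℚ_[3])^k ≠ 0 := fun k => zpow_ne_zero k h3ne
  have hvm1 : ((-1 : ℚ_[3])).valuation = 0 := by
    have h := Padic.valuation_mul (x := (-1:ℚ_[3])) (y := (-1:ℚ_[3])) (by norm_num) (by norm_num)
    norm_num at h
    omega
  have hqneg : ∀ x : ℚ_[3], x ≠ 0 → (-x).valuation = x.valuation := by
    intro x hx
    have h := Padic.valuation_mul (x := (-1:ℚ_[3])) (y := x) (by norm_num) hx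
    rw [hvm1] at h
    simpa using h
  have hvnegL : ∀ x : L, x ≠ 0 → v (-x) = v x := by
    intro x hx
    have h := hmul (em (-1)) x (hemne _ (by norm_num)) hx
    rw [hext _ (by norm_num : (-1:ℚ_[3]) ≠ 0), hvm1] at h
    simpa [hem] using h
  have hvpow : ∀ (x : L) (n : ℕ), x ≠ 0 → v (x^n) = n * v x := by
    intro x n hx
    induction n with
    | zero =>
      simp only [pow_zero, Nat.cast_zero, zero_mul]
      have h := hext 1 one_ne_zero
      rw [map_one] at h
      rw [h, Padic.valuation_one]
      norm_num
    | succ n ih =>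
      rw [pow_succ, hmul _ _ (pow_ne_zero n hx) hx, ih]
      push_cast
      ring
  have hNval : ∀ x : L, x ≠ 0 →
      (Algebra.norm ℚ_[3] x) ≠ 0 ∧ ((Algebra.norm ℚ_[3] x).valuation : ℚ) = 3 * v x := by
    intro x hx
    have h1 := Algebra.norm_eq_prod_automorphisms ℚ_[3] x
    rw [hprod] at h1
    rw [← hem] at h1
    have hσx : σ x ≠ 0 := by
      intro h
      exact hx (by simpa using σ.injective (h.trans (map_zero σ).symm))
    have hσ2x : (σ^2) x ≠ 0 := by
      intro h
      rw [pow_two, AlgEquiv.mul_apply] at h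
      exact hσx (by simpa using σ.injective (h.trans (map_zero σ).symm))
    have hNne : Algebra.norm ℚ_[3] x ≠ 0 := by
      intro h0
      rw [h0, map_zero] at h1
      exact (mul_ne_zero (mul_ne_zero (by simpa using hx) hσx) hσ2x) h1.symm
    refine ⟨hNne, ?_⟩
    have h2 : v (em (Algebra.norm ℚ_[3] x)) = v ((1 : L ≃ₐ[ℚ_[3]] L) x) + v (σ x) + v ((σ^2) x) := by
      rw [h1, hmul _ _ (mul_ne_zero (by simpa using hx) hσx) hσ2x,
        hmul _ _ (by simpa using hx) hσx]
    rw [hext _ hNne] at h2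
    have e1 : v ((1 : L ≃ₐ[ℚ_[3]] L) x) = v x := by simp
    have e2 : v (σ x) = v x := hσv σ x hx
    have e3 : v ((σ^2) x) = v x := hσv (σ^2) x hx
    rw [e1, e2, e3] at h2
    rw [h2]; ring
  -- v θ = m
  have hnormθ : Algebra.norm ℚ_[3] θ = -β := by
    have h := hnormgen 0
    rw [map_zero, add_zero] at h
    rw [h]; ring
  have hvθ : v θ = (m : ℚ) := by
    obtain ⟨hNne, hNv⟩ := hNval θ hθ
    rw [hnormθ, hqneg β hβ, hm] at hNv
    have : ((3 * m : ℤ) : ℚ) = 3 * v θ := hNv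
    push_cast at this
    linarith
  -- α valuation lower bound
  have hs_ge : α ≠ 0 → (2*m : ℤ) ≤ α.valuation := by
    intro hα
    have hAθ : em α * θ ≠ 0 := mul_ne_zero (hemne α hα) hθ
    have heq : em β + θ^3 = -(em α * θ) := by linear_combination hroot'
    have hsumne : em β + θ^3 ≠ 0 := by rw [heq]; exact neg_ne_zero.mpr hAθ
    have hminle := hadd (em β) (θ^3) (hemne β hβ) (pow_ne_zero 3 hθ) hsumne
    rw [heq, hvnegL _ hAθ, hmul _ _ (hemne α hα) hθ, hext α hα, hvθ] at hminle
    rw [hext β hβ, hm, hvpow θ 3 hθ, hvθ] at hminle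
    have hle : min ((((3:ℤ)*m : ℤ) : ℚ)) ((3:ℚ) * (m:ℚ)) ≤ (α.valuation : ℚ) + m := hminle
    rw [min_le_iff] at hle
    have : ((2*m : ℤ) : ℚ) ≤ (α.valuation : ℚ) := by
      rcases hle with h | h <;> push_cast at h ⊢ <;> linarith
    exact_mod_cast this
  -- discriminant parity
  have hθ₃eq : θ₃ = -θ - θ₂ := by linear_combination hsum
  have hAeq : em α = θ*θ₂ - (θ+θ₂)^2 := by linear_combination (θ+θ₂)*hsum - he2
  have hBeq : em β = θ*θ₂*(θ + θ₂) := by linear_combination he3 - θ*θ₂*hsum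
  set d := θ - θ₂ with hd
  have hdne : d ≠ 0 := sub_ne_zero.mpr hne12
  have hdisc : (Algebra.norm ℚ_[3] d)^2 = -(4*α^3 + 27*β^2) := by
    have h1 := Algebra.norm_eq_prod_automorphisms ℚ_[3] d
    rw [hprod] at h1
    rw [← hem] at h1
    have hσd : σ d = θ₂ - θ₃ := by rw [hd, map_sub, ← hθ₂def, ← hθ₃def]
    have hσ2d : (σ^2) d = θ₃ - θ := by
      rw [pow_two, AlgEquiv.mul_apply, hσd, map_sub, ← hθ₃def, hσθ₃]
    rw [hσd, hσ2d] at h1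
    apply hinj
    rw [map_pow, h1]
    simp only [AlgEquiv.one_apply, map_neg, map_add, map_mul, map_pow, map_ofNat]
    rw [hθ₃eq, hAeq, hBeq]
    ring
  have hNdne : Algebra.norm ℚ_[3] d ≠ 0 := (hNval d hdne).1
  have hdiscval : ∃ j : ℤ, (-(4*α^3 + 27*β^2)).valuation = 2*j := by
    refine ⟨(Algebra.norm ℚ_[3] d).valuation, ?_⟩
    rw [← hdisc, pow_two, Padic.valuation_mul hNdne hNdne]
    ring
  have hval27β : ((27:ℚ_[3]) * β^2).valuation = 3 + 6*m := by
    have h27 : ((27:ℚ_[3])).valuation = 3 := by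
      rw [show (27:ℚ_[3]) = (3:ℚ_[3])^(3:ℤ) by norm_num, padic3_val_zpow]
    rw [Padic.valuation_mul (by norm_num : (27:ℚ_[3]) ≠ 0) (pow_ne_zero 2 hβ), h27,
      pow_two, Padic.valuation_mul hβ hβ, hm]
    ring
  have hune : u ≠ 0 := by rw [hu]; exact div_ne_zero hβ (hz3 _)
  have huβ : β = u * (3:ℚ_[3])^(3*m) := by
    rw [hu, div_mul_cancel₀ _ (hz3 _)]
  have huval : u.valuation = 0 := by
    have h := hm
    rw [huβ, Padic.valuation_mul hune (hz3 _), padic3_val_zpow] at h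
    omega
  -- exclude α = 0
  have hαne : α ≠ 0 := by
    intro h0
    obtain ⟨j, hj⟩ := hdiscval
    rw [h0] at hj
    have hre : (-(4*(0:ℚ_[3])^3 + 27*β^2)) = -((27:ℚ_[3])*β^2) := by ring
    rw [hre, hqneg _ (mul_ne_zero (by norm_num) (pow_ne_zero 2 hβ)), hval27β] at hj
    omega
  -- upper bound on valuation of α
  have hs_le : α.valuation ≤ 2*m+1 := by
    by_contra hgt
    push_neg at hgt
    obtain ⟨j, hj⟩ := hdiscval
    have hval4α : ((4:ℚ_[3])*α^3).valuation = 3*α.valuation := by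
      have h4 : ((4:ℚ_[3])).valuation = 0 := by
        rw [show (4:ℚ_[3]) = ((4:ℕ):ℚ_[3]) by norm_num, Padic.valuation_natCast,
          padicValNat.eq_zero_of_not_dvd (by norm_num)]
        norm_num
      rw [Padic.valuation_mul (by norm_num : (4:ℚ_[3]) ≠ 0) (pow_ne_zero 3 hαne), h4,
        pow_succ, pow_two, Padic.valuation_mul (mul_ne_zero hαne hαne) hαne,
        Padic.valuation_mul hαne hαne]
      ring
    have hlt : ((27:ℚ_[3])*β^2).valuation < ((4:ℚ_[3])*α^3).valuation := by
      rw [hval4α, hval27β]; omega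
    have hadd27 := padic3_val_add (x := (27:ℚ_[3])*β^2)
      (mul_ne_zero (by norm_num) (pow_ne_zero 2 hβ))
      (Or.inr ⟨mul_ne_zero (by norm_num) (pow_ne_zero 3 hαne), hlt⟩)
    have hre : -(4*α^3 + 27*β^2) = -((27:ℚ_[3])*β^2 + (4:ℚ_[3])*α^3) := by ring
    rw [hre, hqneg _ hadd27.1, hadd27.2, hval27β] at hj
    omega
  -- exclude valuation 2m
  have hs2m : α.valuation ≠ 2*m := by
    intro hs
    set A : ℚ_[3] := α * (3:ℚ_[3])^(-(2*m)) with hA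
    have hAne : A ≠ 0 := mul_ne_zero hαne (hz3 _)
    have hAval : A.valuation = 0 := by
      rw [hA, Padic.valuation_mul hαne (hz3 _), padic3_val_zpow, hs]; ring
    have hαA : α = A * (3:ℚ_[3])^(2*m) := by
      rw [hA, mul_assoc, ← zpow_add₀ h3ne]
      simp
    have hunorm1 : ‖u‖ = 1 := by
      rw [Padic.norm_eq_zpow_neg_valuation hune, huval]; norm_num
    have hAnorm1 : ‖A‖ = 1 := by
      rw [Padic.norm_eq_zpow_neg_valuation hAne, hAval]; norm_num
    set Ai : ℤ_[3] := ⟨A, by rw [hAnorm1]⟩ with hAi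
    set ui : ℤ_[3] := ⟨u, by rw [hunorm1]⟩ with hui
    have hAicoe : (Ai : ℚ_[3]) = A := rfl
    have huicoe : (ui : ℚ_[3]) = u := rfl
    have hAizm : PadicInt.toZMod Ai ≠ 0 := (padicInt_norm_one_iff Ai).mp (by rw [PadicInt.norm_def, hAicoe, hAnorm1])
    have huizm : PadicInt.toZMod ui = 1 := by
      obtain ⟨c, hc⟩ := hu1
      have hueq : ui = 1 + 9 * c := by
        apply Subtype.ext
        show u = ((1 + 9*c : ℤ_[3]) : ℚ_[3])
        rw [PadicInt.coe_add, PadicInt.coe_mul, PadicInt.coe_one,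
          show ((9:ℤ_[3]):ℚ_[3]) = 9 from by
            rw [show (9:ℤ_[3]) = ((9:ℕ):ℤ_[3]) by norm_cast, PadicInt.coe_natCast]; norm_num]
        linear_combination hc
      have h9 : PadicInt.toZMod (9 : ℤ_[3]) = 0 := by
        rw [map_ofNat]
        decide
      rw [hueq, map_add, map_mul, map_one, h9, zero_mul, add_zero]
    -- scaled root η and conjugates
    set t3 : L := em ((3:ℚ_[3])^(-m)) with ht3
    have ht3ne : t3 ≠ 0 := hemne _ (hz3 _)
    set η : L := t3 * θ with hηdef
    set η₂ : L := t3 * θ₂ with hη₂def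
    set η₃ : L := t3 * θ₃ with hη₃def
    have hσem : ∀ q : ℚ_[3], σ (em q) = em q := by
      intro q; rw [hem]; exact σ.commutes q
    have hση : σ η = η₂ := by
      rw [hηdef, map_mul, ht3, hσem, ← ht3, ← hθ₂def, ← hη₂def]
    have hση₂ : σ η₂ = η₃ := by
      rw [hη₂def, map_mul, ht3, hσem, ← ht3, ← hθ₃def, ← hη₃def]
    have hz2m : (3:ℚ_[3])^(-(2*m)) = ((3:ℚ_[3])^(-m))^2 := by
      rw [← zpow_natCast ((3:ℚ_[3])^(-m)) 2, ← zpow_mul]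
      congr 1; ring
    have hz3m : (3:ℚ_[3])^(-(3*m)) = ((3:ℚ_[3])^(-m))^3 := by
      rw [← zpow_natCast ((3:ℚ_[3])^(-m)) 3, ← zpow_mul]
      congr 1; ring
    have hAt : em A = t3^2 * em α := by
      rw [hA, map_mul, hz2m, map_pow, ← ht3]; ring
    have huu : u = β * (3:ℚ_[3])^(-(3*m)) := by
      rw [huβ, mul_assoc, ← zpow_add₀ h3ne]; simp
    have hut : em u = t3^3 * em β := by
      rw [huu, map_mul, hz3m, map_pow, ← ht3]; ring
    have hηsum : η + η₂ + η₃ = 0 := by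
      rw [hηdef, hη₂def, hη₃def]; linear_combination t3 * hsum
    have hηe2 : η*η₂ + η*η₃ + η₂*η₃ = em A := by
      rw [hηdef, hη₂def, hη₃def, hAt]; linear_combination t3^2 * he2
    have hηe3 : η*η₂*η₃ = - em u := by
      rw [hηdef, hη₂def, hη₃def, hut]; linear_combination t3^3 * he3
    have hη₃eq : η₃ = -η - η₂ := by linear_combination hηsum
    have hAη : em A = η*η₂ - (η+η₂)^2 := by linear_combination (η+η₂)*hηsum - hηe2
    have hBη : em u = η*η₂*(η+η₂) := by linear_combination hηe3 - η*η₂*hηsum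
    -- decompose the ramified element
    obtain ⟨x₀, hx₀ne, hx₀v⟩ := hram
    have hx₀mem : x₀ ∈ Algebra.adjoin ℚ_[3] {θ} := by rw [hadj]; trivial
    rw [Algebra.adjoin_singleton_eq_range_aeval] at hx₀mem
    obtain ⟨P, hP⟩ := hx₀mem
    have hP' : aeval θ P = x₀ := hP
    set R := P %ₘ f with hRdef
    have haR : aeval θ R = x₀ := by
      have hsplit := modByMonic_add_div P f
      rw [← hP', ← hsplit, map_add, map_mul, hroot, zero_mul, add_zero, hRdef]
    have hRdeg : R.natDegree < 3 := by
      by_cases hR0 : R = 0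
      · rw [hR0]; simp
      · have hlt := Polynomial.degree_modByMonic_lt P hmonic
        rw [← hRdef, hdegree] at hlt
        exact (Polynomial.natDegree_lt_iff_degree_lt hR0).mpr (by exact_mod_cast hlt)
    have hx₀eq : x₀ = em (R.coeff 0) + em (R.coeff 1) * θ + em (R.coeff 2) * θ^2 := by
      rw [← haR, aeval_eq_sum_range' hRdeg]
      rw [Finset.sum_range_succ, Finset.sum_range_succ, Finset.sum_range_one]
      simp only [Algebra.smul_def, ← hem, pow_zero, mul_one, pow_one]
      try ring
    set a : ℚ_[3] := R.coeff 0 with hadef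
    set b : ℚ_[3] := R.coeff 1 * (3:ℚ_[3])^m with hbdef
    set c : ℚ_[3] := R.coeff 2 * (3:ℚ_[3])^(2*m) with hcdef
    have hbη : em b * η = em (R.coeff 1) * θ := by
      rw [hηdef, ht3, hbdef, ← mul_assoc, ← map_mul]
      congr 1
      rw [mul_assoc, ← zpow_add₀ h3ne]
      simp
    have hcη : em c * η^2 = em (R.coeff 2) * θ^2 := by
      have hpow : ((3:ℚ_[3])^(-m))^2 = (3:ℚ_[3])^(-(2*m)) := by
        rw [← zpow_natCast ((3:ℚ_[3])^(-m)) 2, ← zpow_mul]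
        congr 1
        push_cast
        ring
      have h2 : c * (3:ℚ_[3])^(-(2*m)) = R.coeff 2 := by
        rw [hcdef, mul_assoc, ← zpow_add₀ h3ne]
        simp
      rw [hηdef, ht3, mul_pow, ← map_pow, hpow, ← mul_assoc, ← map_mul, h2]
    have hx₀η : x₀ = em a + em b * η + em c * η^2 := by
      rw [hbη, hcη]
      exact hx₀eq
    have habc : ¬(a = 0 ∧ b = 0 ∧ c = 0) := by
      rintro ⟨h1, h2, h3⟩
      apply hx₀ne
      rw [hx₀η, h1, h2, h3]
      simp
    -- norm of x₀ via the cubic form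
    have hσx₀ : σ x₀ = em a + em b * η₂ + em c * η₂^2 := by
      rw [hx₀η]
      simp only [map_add, map_mul, map_pow, hσem, hση]
    have hσ2x₀ : (σ^2) x₀ = em a + em b * η₃ + em c * η₃^2 := by
      rw [pow_two, AlgEquiv.mul_apply, hσx₀]
      simp only [map_add, map_mul, map_pow, hσem, hση₂]
    set F : ℚ_[3] := a^3 - u*b^3 + u^2*c^3 - 2*A*(a^2*c) + A*(a*b^2) + A^2*(a*c^2)
        + 3*u*(a*b*c) - A*u*(b*c^2) with hFdef
    have hNx₀ : Algebra.norm ℚ_[3] x₀ = F := by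
      apply hinj
      have h1 := Algebra.norm_eq_prod_automorphisms ℚ_[3] x₀
      rw [hprod, ← hem] at h1
      rw [h1, hσx₀, hσ2x₀, AlgEquiv.one_apply, hx₀η, hFdef]
      simp only [map_add, map_sub, map_mul, map_pow, map_ofNat]
      rw [hη₃eq, hAη, hBη]
      ring
    -- scale coordinates into ℤ₃
    obtain ⟨k, a', b', c', ha', hb', hc', hone⟩ := scale3 a b c habc
    have h2coe : ((2:ℤ_[3]):ℚ_[3]) = 2 := by
      rw [show (2:ℤ_[3]) = ((2:ℕ):ℤ_[3]) by norm_cast, PadicInt.coe_natCast]; norm_num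
    have h3coe : ((3:ℤ_[3]):ℚ_[3]) = 3 := by
      rw [show (3:ℤ_[3]) = ((3:ℕ):ℤ_[3]) by norm_cast, PadicInt.coe_natCast]; norm_num
    set Fi : ℤ_[3] := a'^3 - ui*b'^3 + ui^2*c'^3 - 2*Ai*(a'^2*c') + Ai*(a'*b'^2) + Ai^2*(a'*c'^2)
        + 3*ui*(a'*b'*c') - Ai*ui*(b'*c'^2) with hFidef
    have hFicoe : (Fi : ℚ_[3]) = (a':ℚ_[3])^3 - u*(b':ℚ_[3])^3 + u^2*(c':ℚ_[3])^3
        - 2*A*((a':ℚ_[3])^2*(c':ℚ_[3])) + A*((a':ℚ_[3])*(b':ℚ_[3])^2)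
        + A^2*((a':ℚ_[3])*(c':ℚ_[3])^2) + 3*u*((a':ℚ_[3])*(b':ℚ_[3])*(c':ℚ_[3]))
        - A*u*((b':ℚ_[3])*(c':ℚ_[3])^2) := by
      rw [hFidef]
      push_cast [h2coe, h3coe]
      ring
    have hkk : ((3:ℚ_[3])^k)^3 = (3:ℚ_[3])^(3*k) := by
      rw [← zpow_natCast ((3:ℚ_[3])^k) 3, ← zpow_mul]
      congr 1; ring
    have hFval : Algebra.norm ℚ_[3] x₀ = (3:ℚ_[3])^(3*k) * (Fi:ℚ_[3]) := by
      rw [hNx₀, hFdef, hFicoe, ha', hb', hc', ← hkk]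
      ring
    -- case on the residue of A
    have hzmod3 : ∀ z : ZMod 3, z = 0 ∨ z = 1 ∨ z = 2 := by decide
    rcases hzmod3 (PadicInt.toZMod Ai) with hA0 | hA1 | hA2
    · exact hAizm hA0
    · -- Hensel: f has a rational root, contradicting irreducibility
      set g : Polynomial ℤ_[3] := X^3 + C Ai * X + C ui with hgdef
      have hgeval1 : g.eval 1 = 1 + Ai + ui := by rw [hgdef]; simp
      have hgder1 : g.derivative.eval 1 = 3 + Ai := by
        rw [hgdef]
        simp [Polynomial.derivative_X_pow]
        norm_num
      have hnum : PadicInt.toZMod (1 + Ai + ui) = 0 := by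
        rw [map_add, map_add, map_one, hA1, huizm]
        decide
      have hlt1 : ‖g.eval 1‖ < 1 := by
        rw [hgeval1]
        rcases lt_or_eq_of_le (PadicInt.norm_le_one (1 + Ai + ui)) with h | h
        · exact h
        · exact absurd ((padicInt_norm_one_iff _).mp h) (by simp [hnum])
      have hder1 : ‖g.derivative.eval 1‖ = 1 := by
        rw [hgder1]
        apply (padicInt_norm_one_iff _).mpr
        rw [map_add, hA1, show PadicInt.toZMod (3:ℤ_[3]) = 0 from by rw [map_ofNat]; decide]
        decide
      obtain ⟨z, hz, -, -, -⟩ := hensels_lemma (p := 3) (F := g) (a := 1)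
        (by change ‖g.eval 1‖ < ‖g.derivative.eval 1‖ ^ 2; rw [hder1]; simpa using hlt1)
      have hzeq : (z:ℚ_[3])^3 + A*(z:ℚ_[3]) + u = 0 := by
        have h1 : z^3 + Ai*z + ui = 0 := by
          have h2 := hz
          rw [hgdef] at h2
          simpa using h2
        have h3 := congrArg (fun t : ℤ_[3] => (t : ℚ_[3])) h1
        push_cast at h3
        exact h3
      have hmm3 : ((3:ℚ_[3])^m)^3 = (3:ℚ_[3])^(3*m) := by
        rw [← zpow_natCast ((3:ℚ_[3])^m) 3, ← zpow_mul]
        congr 1; ring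
      have hmm2 : (3:ℚ_[3])^(2*m) * (3:ℚ_[3])^m = (3:ℚ_[3])^(3*m) := by
        rw [← zpow_add₀ h3ne]
        congr 1; ring
      set r : ℚ_[3] := (3:ℚ_[3])^m * (z:ℚ_[3]) with hrdef
      have hfr : f.IsRoot r := by
        show f.eval r = 0
        rw [hf]
        simp only [eval_add, eval_mul, eval_pow, eval_X, eval_C]
        rw [hrdef, hαA, huβ]
        have hmm2' : (3:ℚ_[3])^(2*m) = ((3:ℚ_[3])^m)^2 := by
          rw [← zpow_natCast ((3:ℚ_[3])^m) 2, ← zpow_mul]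
          congr 1
          push_cast
          ring
        rw [hmm2', ← hmm3]
        calc ((3:ℚ_[3])^m * (z:ℚ_[3]))^3 + A * ((3:ℚ_[3])^m)^2 * ((3:ℚ_[3])^m * (z:ℚ_[3]))
              + u * ((3:ℚ_[3])^m)^3
            = ((3:ℚ_[3])^m)^3 * ((z:ℚ_[3])^3 + A*(z:ℚ_[3]) + u) := by ring
          _ = 0 := by rw [hzeq]; ring
      have hdvd : (X - C r) ∣ f := dvd_iff_isRoot.mpr hfr
      obtain ⟨q, hq⟩ := hdvd
      rcases hirr.isUnit_or_isUnit hq with h | h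
      · rw [Polynomial.isUnit_iff_degree_eq_zero, degree_X_sub_C] at h
        norm_num at h
      · rw [Polynomial.isUnit_iff_degree_eq_zero] at h
        have hdq : f.degree = (X - C r).degree + q.degree := by rw [hq, Polynomial.degree_mul]
        rw [hdegree, degree_X_sub_C, h] at hdq
        norm_num at hdq
    · -- anisotropic case: the norm form is a unit
      have hFizm : PadicInt.toZMod Fi ≠ 0 := by
        intro h0
        rw [hFidef] at h0
        simp only [map_add, map_sub, map_mul, map_pow, map_ofNat, map_one, hA2, huizm] at h0
        obtain ⟨ha0, hb0, hc0⟩ := zmod3_aniso (PadicInt.toZMod a') (PadicInt.toZMod b')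
          (PadicInt.toZMod c') (by linear_combination h0)
        rcases hone with h | h | h
        · exact ((padicInt_norm_one_iff a').mp h) ha0
        · exact ((padicInt_norm_one_iff b').mp h) hb0
        · exact ((padicInt_norm_one_iff c').mp h) hc0
      have hFinorm : ‖(Fi:ℚ_[3])‖ = 1 := by
        rw [← PadicInt.norm_def]
        exact (padicInt_norm_one_iff Fi).mpr hFizm
      have hFine : (Fi:ℚ_[3]) ≠ 0 := by
        intro h0
        rw [h0, norm_zero] at hFinorm
        norm_num at hFinorm
      have hFival : (Fi:ℚ_[3]).valuation = 0 := by
        rw [Padic.norm_eq_zpow_neg_valuation hFine] at hFinorm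
        have h1 : ((3:ℕ):ℝ)^(-(Fi:ℚ_[3]).valuation) = ((3:ℕ):ℝ)^(0:ℤ) := by
          rw [hFinorm]; norm_num
        have := zpow_right_injective₀ (by norm_num : (0:ℝ) < ((3:ℕ):ℝ))
          (by norm_num : ((3:ℕ):ℝ) ≠ 1) h1
        omega
      have hNval0 : (Algebra.norm ℚ_[3] x₀).valuation = 3*k := by
        rw [hFval, Padic.valuation_mul (hz3 _) hFine, padic3_val_zpow, hFival]
        ring
      obtain ⟨hNne, hNv⟩ := hNval x₀ hx₀ne
      rw [hNval0] at hNv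
      apply hx₀v k
      have h2 : ((3*k : ℤ):ℚ) = 3 * v x₀ := hNv
      push_cast at h2
      linarith
  -- conclude: valuation of α is 2m+1
  have hsval : α.valuation = 2*m + 1 := by
    have h1 := hs_ge hαne
    omega
  have hwne : w ≠ 0 := by rw [hw]; exact div_ne_zero hαne (hz3 _)
  have hαw : α = w * (3:ℚ_[3])^(2*m+1) := by rw [hw, div_mul_cancel₀ _ (hz3 _)]
  have hwval : w.valuation = 0 := by
    have h1 := hsval
    rw [hαw, Padic.valuation_mul hwne (hz3 _), padic3_val_zpow] at h1
    omega
  have h3wne : (3:ℚ_[3])*w ≠ 0 := mul_ne_zero h3ne hwne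
  have h3wval : ((3:ℚ_[3])*w).valuation = 1 := by
    rw [show (3:ℚ_[3]) = (3:ℚ_[3])^(1:ℤ) from by norm_num]
    rw [Padic.valuation_mul (hz3 1) hwne, padic3_val_zpow, hwval]
    norm_num
  obtain ⟨c, hc⟩ := hu1
  have hsplit : 1 - u + 3*w = 3*w + (-(9*(c:ℚ_[3]))) := by rw [← hc]; ring
  have hDval : (1 - u + 3*w) ≠ 0 ∧ (1 - u + 3*w).valuation = 1 := by
    by_cases hc0 : (c:ℚ_[3]) = 0
    · constructor
      · rw [hsplit, hc0, mul_zero, neg_zero, add_zero]; exact h3wne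
      · rw [hsplit, hc0, mul_zero, neg_zero, add_zero]; exact h3wval
    · have h9c : (-(9*(c:ℚ_[3]))).valuation = 2 + (c:ℚ_[3]).valuation := by
        rw [hqneg _ (mul_ne_zero (by norm_num) hc0),
          Padic.valuation_mul (by norm_num : (9:ℚ_[3]) ≠ 0) hc0,
          show (9:ℚ_[3]) = (3:ℚ_[3])^(2:ℤ) from by norm_num, padic3_val_zpow]
      have hcge : 0 ≤ (c:ℚ_[3]).valuation := by
        rw [← Padic.norm_le_one_iff_val_nonneg, ← PadicInt.norm_def]
        exact PadicInt.norm_le_one c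
      have hlt : ((3:ℚ_[3])*w).valuation < (-(9*(c:ℚ_[3]))).valuation := by
        rw [h3wval, h9c]; omega
      have h := padic3_val_add (x := (3:ℚ_[3])*w) h3wne
        (Or.inr ⟨neg_ne_zero.mpr (mul_ne_zero (by norm_num) hc0), hlt⟩)
      rw [← hsplit, h3wval] at h
      exact h
  refine ⟨?_, hDval.2, ?_⟩
  · -- the norm identity
    rw [hnormgen ((3:ℚ_[3])^m)]
    have hm3 : ((3:ℚ_[3])^m)^3 = (3:ℚ_[3])^(3*m) := by
      rw [← zpow_natCast ((3:ℚ_[3])^m) 3, ← zpow_mul]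
      congr 1; ring
    have e1 : (3:ℚ_[3])^(2*m+1) = 3 * ((3:ℚ_[3])^m)^2 := by
      rw [zpow_add₀ h3ne, zpow_one, ← zpow_natCast ((3:ℚ_[3])^m) 2, ← zpow_mul,
        show m * ((2:ℕ):ℤ) = 2*m from by push_cast; ring]
      ring
    have e2 : (3:ℚ_[3])^(-(3*m)) = (((3:ℚ_[3])^m)^3)⁻¹ := by
      rw [zpow_neg, hm3]
    rw [hαw, huβ, e1, e2, ← hm3]
    have hTne : ((3:ℚ_[3])^m)^3 ≠ 0 := pow_ne_zero _ (hz3 m)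
    field_simp
    ring
  · -- not a cube
    rintro ⟨c2, hc2⟩
    have hc2ne : c2 ≠ 0 := by
      intro h0
      rw [h0] at hc2
      rw [show (0:ℚ_[3])^3 = 0 from by norm_num] at hc2
      exact hDval.1 hc2.symm
    have hval3 : (c2^3).valuation = 3 * c2.valuation := by
      rw [pow_succ, pow_two, Padic.valuation_mul (mul_ne_zero hc2ne hc2ne) hc2ne,
        Padic.valuation_mul hc2ne hc2ne]
      ring
    rw [hc2, hDval.2] at hval3
    omega
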